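/- Let γ_1,…,γ_m be (ε)-contours at σ in Λ(l), each non-crossing, and let 0 ≤ p ≤ m. Then (1/2)Δ_{γ_1,…,γ_m}H^ω_{Λ(l)}(σ) ≥ (1/2)Δ_{γ_1,…,γ_p}H^ω_{Λ(l)}(σ) + ∑_{j=p+1}^m ((1/2)|γ_j| − |γ_j ∩ ∂Q(Λ(l))|) ≥ (1/2)Δ_{γ_1,…,γ_p}H^ω_{Λ(l)}(σ) ≥ 0. -/

import Mathlib

open Finset

/-! ### Basic lattice notions for the 2-D Ising model on the square Λ(l) -/

abbrev Site := ℤ × ℤ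

/-- `l¹`-distance on `ℤ²`. -/
def d1 (x y : Site) : ℤ := |x.1 - y.1| + |x.2 - y.2|

/-- `l∞`-distance on `ℤ²`. -/
def dinf (x y : Site) : ℤ := max |x.1 - y.1| |x.2 - y.2|

/-- There is a path from `x` to `y` inside `S` with steps of `d`-distance 1. -/
def ChainIn (d : Site → Site → ℤ) (S : Set Site) (x y : Site) : Prop :=
  ∃ L : List Site, L.Chain' (fun a b => d a b = 1) ∧ L.head? = some x ∧
    L.getLast? = some y ∧ ∀ a ∈ L, a ∈ S

/-- `S` is connected with respect to steps of `d`-distance 1. -/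
def ConnIn (d : Site → Site → ℤ) (S : Set Site) : Prop :=
  ∀ x ∈ S, ∀ y ∈ S, ChainIn d S x y

def lamLo (l : ℕ) : ℤ := 1 - (((l + 1) / 2 : ℕ) : ℤ)
def lamHi (l : ℕ) : ℤ := ((l / 2 : ℕ) : ℤ)

/-- The lamBox the box. -/
noncomputable def lamBox (l : ℕ) : Finset Site := Finset.Icc (lamLo l, lamLo l) (lamHi l, lamHi l)

/-- The exterior boundary `∂_ex Λ(l)`. -/
def extBdry (l : ℕ) : Set Site := {y | y ∉ lamBox l ∧ ∃ x ∈ lamBox l, d1 x y = 1}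

/-- An interval of `∂_ex Λ(l)` : an `l∞`-connected subset of it. -/
def IsBdryInterval (l : ℕ) (I : Finset Site) : Prop :=
  (↑I : Set Site) ⊆ extBdry l ∧ ConnIn dinf ↑I

/-- The four nearest neighbours of a site. -/
def nbrs (x : Site) : Finset Site :=
  {(x.1 + 1, x.2), (x.1 - 1, x.2), (x.1, x.2 + 1), (x.1, x.2 - 1)}

/-- A dual bond, recorded by its two endpoints `v`, a dual vertex `v` standing for the
point `v + (1/2, 1/2)` of the dual lattice. -/
abbrev DBond := Sym2 Site

/-- The dual bond of the nearest-neighbour bond `{x, y}`. -/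
def dualBond (x y : Site) : DBond :=
  if x.2 = y.2 then s((min x.1 y.1, x.2 - 1), (min x.1 y.1, x.2))
  else s((x.1 - 1, min x.2 y.2), (x.1, min x.2 y.2))

/-- `∂Q(Θ)` : the set of dual bonds separating `Θ` from its complement. -/
def contourOf (Θ : Finset Site) : Finset DBond :=
  Θ.biUnion fun x => ((nbrs x).filter (· ∉ Θ)).image fun y => dualBond x y

/-- `Θ` and its complement are `l¹`-connected, so that `∂Q(Θ)` is a contour. -/
def IsContourRegion (Θ : Finset Site) : Prop :=
  ConnIn d1 ↑Θ ∧ ConnIn d1 ((↑Θ : Set Site)ᶜ)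

/-- `∂Q(Λ(l))`, as a set of dual bonds. -/
noncomputable def boxBdry (l : ℕ) : Finset DBond := contourOf (lamBox l)

/-- The dual vertex `v` lies on the side `F_l^j` of `Q(Λ(l))` (`j ∈ {1,-1,2,-2}` for
right, left, top, bottom). -/
def onSide (l : ℕ) (j : ℤ) (v : Site) : Prop :=
  (j = 1 ∧ v.1 = lamHi l ∧ lamLo l - 1 ≤ v.2 ∧ v.2 ≤ lamHi l) ∨
  (j = -1 ∧ v.1 = lamLo l - 1 ∧ lamLo l - 1 ≤ v.2 ∧ v.2 ≤ lamHi l) ∨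
  (j = 2 ∧ v.2 = lamHi l ∧ lamLo l - 1 ≤ v.1 ∧ v.1 ≤ lamHi l) ∨
  (j = -2 ∧ v.2 = lamLo l - 1 ∧ lamLo l - 1 ≤ v.1 ∧ v.1 ≤ lamHi l)

/-- The set of dual bonds `γ` meets the side `F_l^j`. -/
def touches (l : ℕ) (j : ℤ) (γ : Finset DBond) : Prop :=
  ∃ e ∈ γ, ∃ v : Site, v ∈ e ∧ onSide l j v

def HorizCrossing (l : ℕ) (γ : Finset DBond) : Prop := touches l 1 γ ∧ touches l (-1) γ
def VertCrossing (l : ℕ) (γ : Finset DBond) : Prop := touches l 2 γ ∧ touches l (-2) γ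

/-- `γ` is neither horizontally nor vertically crossing. -/
def NonCrossing (l : ℕ) (γ : Finset DBond) : Prop :=
  ¬ (HorizCrossing l γ ∨ VertCrossing l γ)

/-- Two dual bonds are adjacent if they share a dual vertex. -/
def DAdj (a b : DBond) : Prop := ∃ v : Site, v ∈ a ∧ v ∈ b

/-- A set of dual bonds is connected (via shared dual vertices). -/
def DConn (S : Finset DBond) : Prop :=
  ∀ e ∈ S, ∀ f ∈ S, ∃ L : List DBond, L.Chain' DAdj ∧ L.head? = some e ∧
    L.getLast? = some f ∧ ∀ a ∈ L, a ∈ S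

/-- Dual bonds separating `Θt` from `Λ(l) \ Θt` inside the lamBox. -/
noncomputable def interiorBdry (l : ℕ) (Θt : Finset Site) : Finset DBond :=
  Θt.biUnion fun x => ((nbrs x).filter fun y => y ∈ lamBox l ∧ y ∉ Θt).image fun y => dualBond x y

/-- The sites of `Λ(l)` along the side `F_l^j`. -/
def sideSites (l : ℕ) (j : ℤ) (x : Site) : Prop :=
  x ∈ lamBox l ∧ ((j = 1 ∧ x.1 = lamHi l) ∨ (j = -1 ∧ x.1 = lamLo l) ∨
    (j = 2 ∧ x.2 = lamHi l) ∨ (j = -2 ∧ x.2 = lamLo l))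

/-- The data of the distinguished connected component `γ̲ = γu` of `γ \ ∂Q(Λ(l))` and of the
region `Θ̃ = Θt` into which a non-crossing contour `γ = ∂Q(Θ)` divides the lamBox: `γu` is a
connected component of `γ \ ∂Q(Λ(l))` dividing `Λ(l)` into the `l¹`-connected pieces `Θt` and
`Λ(l) \ Θt`, with `Θ ⊆ Θt` and `F_l^i ∪ F_l^j ⊆ ∂Q(Λ(l) \ Θt)` for untouched sides `i, j`. -/
def UnderlineData (l : ℕ) (Θ : Finset Site) (γu : Finset DBond) (Θt : Finset Site) : Prop :=
  γu ⊆ contourOf Θ \ boxBdry l ∧ DConn γu ∧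
  (∀ e ∈ contourOf Θ \ boxBdry l, e ∉ γu → ∀ f ∈ γu, ¬ DAdj e f) ∧
  Θ ⊆ Θt ∧ Θt ⊆ lamBox l ∧ ConnIn d1 ↑Θt ∧ ConnIn d1 ↑(lamBox l \ Θt) ∧
  interiorBdry l Θt = γu ∧
  ∃ i j : ℤ, (i = 1 ∨ i = -1) ∧ (j = 2 ∨ j = -2) ∧
    ¬ touches l i (contourOf Θ) ∧ ¬ touches l j (contourOf Θ) ∧
    (∀ x, sideSites l i x → x ∉ Θt) ∧ (∀ x, sideSites l j x → x ∉ Θt)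

/-- `γ̄ = ∂Q(Λ(l)) ∩ ∂Q(Θ̃)`. -/
noncomputable def gammaBar (l : ℕ) (Θt : Finset Site) : Finset DBond := boxBdry l ∩ contourOf Θt

/-- `V_ex(γ)` : sites of the exterior boundary attached to dual bonds of `γ`. -/
noncomputable def Vex (l : ℕ) (γ : Finset DBond) : Finset Site :=
  (lamBox l).biUnion fun x => (nbrs x).filter fun y => y ∉ lamBox l ∧ dualBond x y ∈ γ

/-- `T_Θ` : flip the spins in `Θ`. -/
def flipC (Θ : Finset Site) (σ : Site → ℤ) : Site → ℤ :=
  fun x => if x ∈ Θ then -σ x else σ x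

/-- The Ising Hamiltonian `H^ω_{Λ(l)}(σ)` with boundary condition `ω`. -/
noncomputable def Ham (l : ℕ) (ω : Site → ℝ) (σ : Site → ℤ) : ℝ :=
  -(1/2) * ∑ x ∈ lamBox l, ∑ y ∈ (nbrs x).filter (· ∈ lamBox l), ((σ x * σ y : ℤ) : ℝ)
    - ∑ x ∈ lamBox l, ∑ y ∈ (nbrs x).filter (· ∉ lamBox l), (σ x : ℝ) * ω y

/-- `Δ_{γ₁,…,γ_p} H^ω_{Λ(l)}(σ) = H(σ) - H(T_{γ₁}∘⋯∘T_{γ_p} σ)`, the contours being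
recorded by their regions `Θ(γ_j)`. -/
noncomputable def dH (l : ℕ) (ω : Site → ℝ) (Θs : List (Finset Site)) (σ : Site → ℤ) : ℝ :=
  Ham l ω σ - Ham l ω (Θs.foldr flipC σ)

/-- `C` is an (ε)-cluster in `Λ(l)` at `σ` : a maximal `l¹`-connected component of
`{x ∈ Λ(l) : σ_x = ε}`. -/
def IsCluster (l : ℕ) (σ : Site → ℤ) (ε : ℤ) (C : Finset Site) : Prop :=
  C.Nonempty ∧ (∀ x ∈ C, x ∈ lamBox l ∧ σ x = ε) ∧ ConnIn d1 ↑C ∧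
  ∀ y ∈ lamBox l, σ y = ε → (∃ x ∈ C, d1 x y = 1) → y ∈ C

/-- The `l¹`-connected component of `x` within `S`. -/
def l1Comp (S : Set Site) (x : Site) : Set Site := {y | ChainIn d1 S x y}

/-- `C` together with the bounded components of its complement; `∂Q(fill C)` is the outer
boundary of `Q(C)`. -/
def fill (C : Finset Site) : Set Site :=
  ↑C ∪ {x | (l1Comp ((↑C : Set Site)ᶜ) x).Finite}

/-- `Θ` is the region `Θ(γ)` of an (ε)-contour `γ` in `Λ(l)` at `σ`. -/
def IsEContour (l : ℕ) (σ : Site → ℤ) (ε : ℤ) (Θ : Finset Site) : Prop :=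
  ∃ C : Finset Site, IsCluster l σ ε C ∧ (↑Θ : Set Site) = fill C

/-- A dual bond is horizontal. -/
def isHorizD (e : DBond) : Prop := ∃ v w : Site, e = s(v, w) ∧ v.2 = w.2

/-- A dual bond is vertical. -/
def isVertD (e : DBond) : Prop := ∃ v w : Site, e = s(v, w) ∧ v.1 = w.1

open Classical in
/-- The number of horizontal dual bonds in `γ`. -/
noncomputable def horizCount (γ : Finset DBond) : ℕ := (γ.filter isHorizD).card

open Classical in
/-- The number of vertical dual bonds in `γ`. -/
noncomputable def vertCount (γ : Finset DBond) : ℕ := (γ.filter isVertD).card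

/-! ### Glauber dynamics -/

/-- Configurations on a finite `Λ ⊂ ℤ²` (`true` = spin `+1`, `false` = spin `-1`). -/
abbrev Cfg (Λ : Finset Site) := ↥Λ → Bool

/-- The spin value of a Boolean. -/
def spinVal (b : Bool) : ℝ := if b then 1 else -1

/-- The Ising Hamiltonian on a general finite `Λ`. -/
noncomputable def HamG (Λ : Finset Site) (ω : Site → ℝ) (σ : Cfg Λ) : ℝ :=
  -(1/2) * ∑ x : ↥Λ, ∑ y : ↥Λ, (if d1 ↑x ↑y = 1 then spinVal (σ x) * spinVal (σ y) else 0)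
    - ∑ x : ↥Λ, ∑ y ∈ (nbrs ↑x).filter (· ∉ Λ), spinVal (σ x) * ω y

/-- The finite-volume Gibbs measure `μ^ω_Λ` at inverse temperature `β`. -/
noncomputable def gibbs (Λ : Finset Site) (ω : Site → ℝ) (β : ℝ) (σ : Cfg Λ) : ℝ :=
  Real.exp (-β * HamG Λ ω σ) / ∑ τ : Cfg Λ, Real.exp (-β * HamG Λ ω τ)

/-- The mean of `f` under the weights `μ`. -/
noncomputable def meanW (Λ : Finset Site) (μ f : Cfg Λ → ℝ) : ℝ := ∑ σ : Cfg Λ, μ σ * f σ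

/-- `σ^x` : flip the spin at `x`. -/
def flipAt (Λ : Finset Site) (σ : Cfg Λ) (x : ↥Λ) : Cfg Λ := Function.update σ x (!(σ x))

/-- The generator `A^ω_Λ` of the stochastic Ising model with flip rates `q`. -/
noncomputable def genA (Λ : Finset Site) (q : ↥Λ → Cfg Λ → ℝ) (f : Cfg Λ → ℝ) (σ : Cfg Λ) : ℝ :=
  ∑ x : ↥Λ, q x σ * (f (flipAt Λ σ x) - f σ)

/-- The variance `μ(|f - μf|²)`. -/
noncomputable def varW (Λ : Finset Site) (μ f : Cfg Λ → ℝ) : ℝ :=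
  meanW Λ μ (fun σ => |f σ - meanW Λ μ f| ^ 2)

/-- The spectral gap `gap(Λ, ω, β)` : the infimum of the Rayleigh quotients
`-μ(f A f) / μ(|f - μf|²)`. -/
noncomputable def specGap (Λ : Finset Site) (ω : Site → ℝ) (β : ℝ)
    (q : ↥Λ → Cfg Λ → ℝ) : ℝ :=
  sInf { r | ∃ f : Cfg Λ → ℝ, varW Λ (gibbs Λ ω β) f ≠ 0 ∧
    r = (- meanW Λ (gibbs Λ ω β) fun σ => f σ * genA Λ q f σ) / varW Λ (gibbs Λ ω β) f }

/-- The `±1`-spin function of a configuration on `Λ(l)` (`0` outside the lamBox). -/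
noncomputable def toSpin (l : ℕ) (σ : Cfg (lamBox l)) : Site → ℤ :=
  fun x => if h : x ∈ lamBox l then (if σ ⟨x, h⟩ then 1 else -1) else 0

/-- The magnetization at the origin, `μ^ω_{Λ(l)}(σ₀)`. -/
noncomputable def magZero (l : ℕ) (ω : Site → ℝ) (β : ℝ) : ℝ :=
  ∑ σ : Cfg (lamBox l), gibbs (lamBox l) ω β σ * ((toSpin l σ (0, 0) : ℤ) : ℝ)

/-- The favoured sign `ε_{l,ω}`. -/
noncomputable def epsSign (l : ℕ) (ω : Site → ℝ) (β : ℝ) : ℤ :=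
  if 0 ≤ magZero l ω β then 1 else -1

/-- The trap event `Γ_l` : some (ε)-contour `γ` at `σ` meets `∂Q(Λ(l))` and has
`|γ| ≥ 2δ₁ l`. -/
def GammaEvent (l : ℕ) (δ₁ : ℝ) (ε : ℤ) : Set (Cfg (lamBox l)) :=
  {σ | ∃ Θ : Finset Site, IsEContour l (toSpin l σ) ε Θ ∧
    (contourOf Θ ∩ boxBdry l).Nonempty ∧ 2 * δ₁ * l ≤ ((contourOf Θ).card : ℝ)}

open Classical in
/-- The Gibbs probability of an event `S ⊂ Ω_{Λ(l)}`. -/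
noncomputable def probOf (l : ℕ) (ω : Site → ℝ) (β : ℝ) (S : Set (Cfg (lamBox l))) : ℝ :=
  ∑ σ ∈ Finset.univ.filter (· ∈ S), gibbs (lamBox l) ω β σ

/-- Union of the contours of a list of regions. -/
def unionB (L : List (Finset Site)) : Finset DBond :=
  L.foldr (fun Θ s => contourOf Θ ∪ s) ∅

/-- Union of a list of regions. -/
def unionR (L : List (Finset Site)) : Finset Site :=
  L.foldr (· ∪ ·) ∅
/-! Group A: basic lemmas -/

lemma mem_nbrs {x y : Site} : y ∈ nbrs x ↔
    y = (x.1+1, x.2) ∨ y = (x.1-1, x.2) ∨ y = (x.1, x.2+1) ∨ y = (x.1, x.2-1) := by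
  simp [nbrs]

lemma d1_of_mem_nbrs {x y : Site} (h : y ∈ nbrs x) : d1 x y = 1 := by
  rcases mem_nbrs.1 h with h | h | h | h <;> subst h <;> simp [d1]

lemma nbrs_symm {x y : Site} (h : y ∈ nbrs x) : x ∈ nbrs y := by
  rcases mem_nbrs.1 h with h | h | h | h <;> subst h <;> simp [mem_nbrs, Prod.ext_iff] <;> try omega

lemma dualBond_right (x : Site) : dualBond x (x.1+1, x.2) = s((x.1, x.2 - 1), (x.1, x.2)) := by
  simp [dualBond, min_def]; try omega

lemma dualBond_left (x : Site) : dualBond x (x.1-1, x.2) = s((x.1-1, x.2-1), (x.1-1, x.2)) := by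
  simp [dualBond, min_def]; try omega

lemma dualBond_up (x : Site) : dualBond x (x.1, x.2+1) = s((x.1-1, x.2), (x.1, x.2)) := by
  have : x.2 ≠ x.2 + 1 := by omega
  simp [dualBond, this, min_def]

lemma dualBond_down (x : Site) : dualBond x (x.1, x.2-1) = s((x.1-1, x.2-1), (x.1, x.2-1)) := by
  have : x.2 ≠ x.2 - 1 := by omega
  simp [dualBond, this, min_def]

/-- key injectivity of dualBond on neighbour pairs -/
lemma dual_inj {x y x' y' : Site} (h : y ∈ nbrs x) (h' : y' ∈ nbrs x')
    (he : dualBond x y = dualBond x' y') :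
    (x = x' ∧ y = y') ∨ (x = y' ∧ y = x') := by
  rcases mem_nbrs.1 h with h | h | h | h <;> subst h <;>
  rcases mem_nbrs.1 h' with h' | h' | h' | h' <;> subst h' <;>
  simp only [dualBond_right, dualBond_left, dualBond_up, dualBond_down, Sym2.eq_iff,
    Prod.ext_iff, Prod.fst, Prod.snd] at he ⊢ <;> omega
/-! Group B: chains and components -/

lemma chainin_refl {d : Site → Site → ℤ} {S : Set Site} {x : Site} (hx : x ∈ S) :
    ChainIn d S x x :=
  ⟨[x], List.isChain_singleton x, by simp, by simp, by simpa⟩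

lemma chainin_step {d : Site → Site → ℤ} {S : Set Site} {x y : Site} (hx : x ∈ S) (hy : y ∈ S)
    (hd : d x y = 1) : ChainIn d S x y :=
  ⟨[x, y], List.isChain_pair.2 hd, by simp, by simp, by simp [hx, hy]⟩

lemma chainin_trans {d : Site → Site → ℤ} {S : Set Site} {x y z : Site}
    (h1 : ChainIn d S x y) (h2 : ChainIn d S y z) : ChainIn d S x z := by
  obtain ⟨L1, hc1, hh1, hl1, hm1⟩ := h1
  obtain ⟨L2, hc2, hh2, hl2, hm2⟩ := h2
  cases L2 with
  | nil => simp at hh2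
  | cons b t =>
    have hb : b = y := by simpa using hh2
    subst hb
    cases t with
    | nil =>
      simp at hl2
      exact ⟨L1, hc1, hh1, by rw [hl1, hl2], hm1⟩
    | cons c t' =>
      refine ⟨L1 ++ (c :: t'), ?_, ?_, ?_, ?_⟩
      · rw [List.Chain', List.isChain_append]
        refine ⟨hc1, (List.isChain_cons.1 hc2).2, ?_⟩
        intro a ha b' hb'
        rw [hl1] at ha
        simp at ha hb'
        subst ha; subst hb'
        exact (List.isChain_cons_cons.1 hc2).1
      · cases L1 with
        | nil => simp at hh1
        | cons a t2 => simpa using hh1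
      · rw [List.getLast?_append_of_ne_nil _ (by simp)]
        simpa using hl2
      · intro a ha
        rcases List.mem_append.1 ha with h | h
        · exact hm1 a h
        · exact hm2 a (by simp [h])

lemma d1_symm (x y : Site) : d1 x y = d1 y x := by
  simp [d1, abs_sub_comm]

lemma chainin_d1_symm {S : Set Site} {x y : Site} (h : ChainIn d1 S x y) : ChainIn d1 S y x := by
  obtain ⟨L, hc, hh, hl, hm⟩ := h
  refine ⟨L.reverse, ?_, by simpa using hl, by simpa using hh, by simpa using hm⟩
  rw [List.Chain', List.isChain_reverse]
  exact hc.imp (fun a b hab => by rw [d1_symm] at hab; exact hab)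

lemma mem_l1Comp_self {S : Set Site} {x : Site} (hx : x ∈ S) : x ∈ l1Comp S x :=
  chainin_refl hx

lemma mem_of_mem_l1Comp {S : Set Site} {x y : Site} (h : y ∈ l1Comp S x) : y ∈ S := by
  obtain ⟨L, hc, hh, hl, hm⟩ := h
  exact hm y (List.mem_of_getLast? hl)

lemma l1Comp_eq_of_adj {S : Set Site} {x y : Site} (hx : x ∈ S) (hy : y ∈ S)
    (hd : d1 x y = 1) : l1Comp S x = l1Comp S y := by
  ext z
  constructor
  · intro hz
    exact chainin_trans (chainin_d1_symm (chainin_step hx hy hd)) hz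
  · intro hz
    exact chainin_trans (chainin_step hx hy hd) hz
/-! Group C: clusters, fill, regions -/

lemma mem_lamBox {l : ℕ} {x : Site} : x ∈ lamBox l ↔
    lamLo l ≤ x.1 ∧ x.1 ≤ lamHi l ∧ lamLo l ≤ x.2 ∧ x.2 ≤ lamHi l := by
  simp [lamBox, Finset.mem_Icc, Prod.le_def]; tauto

lemma mem_fill {C : Finset Site} {x : Site} :
    x ∈ fill C ↔ x ∈ C ∨ (l1Comp ((↑C : Set Site)ᶜ) x).Finite := by
  simp [fill]

lemma ray_infinite {S : Set Site} {x : Site} (v : Site) (hv : |v.1| + |v.2| = 1)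
    (hmem : ∀ t : ℕ, ((x.1 + t * v.1, x.2 + t * v.2) : Site) ∈ S) :
    (l1Comp S x).Infinite := by
  have key : ∀ t : ℕ, ((x.1 + t * v.1, x.2 + t * v.2) : Site) ∈ l1Comp S x := by
    intro t
    induction t with
    | zero => simpa using mem_l1Comp_self (by simpa using hmem 0)
    | succ n ih =>
      have hd : d1 (x.1 + n * v.1, x.2 + n * v.2) (x.1 + (n+1) * v.1, x.2 + (n+1) * v.2) = 1 := by
        have h1 : (x.1 + n * v.1) - (x.1 + (n+1) * v.1) = -v.1 := by push_cast; ring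
        have h2 : (x.2 + n * v.2) - (x.2 + (n+1) * v.2) = -v.2 := by push_cast; ring
        simp only [d1, h1, h2, abs_neg]
        exact hv
      exact chainin_trans ih (chainin_step (mem_of_mem_l1Comp ih) (by push_cast; exact hmem (n+1)) hd)
  apply Set.infinite_of_injective_forall_mem (f := fun t : ℕ => ((x.1 + t * v.1, x.2 + t * v.2) : Site))
  case hi =>
    intro a b hab
    simp only [Prod.ext_iff] at hab
    have hv1 : v.1 ≠ 0 ∨ v.2 ≠ 0 := by
      rcases abs_cases v.1 with ⟨h1, _⟩ | ⟨h1, _⟩ <;> rcases abs_cases v.2 with ⟨h2, _⟩ | ⟨h2, _⟩ <;> omega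
    rcases hv1 with h | h
    · have : (a : ℤ) = b := mul_right_cancel₀ h (by linarith [hab.1] : (a : ℤ) * v.1 = b * v.1)
      exact_mod_cast this
    · have : (a : ℤ) = b := mul_right_cancel₀ h (by linarith [hab.2] : (a : ℤ) * v.2 = b * v.2)
      exact_mod_cast this
  case hf => exact key

/-- Any site outside the box has infinite `l¹`-component in the complement of any subset of the box. -/
lemma comp_infinite_of_outside {l : ℕ} {C : Finset Site} (hC : ∀ z ∈ C, z ∈ lamBox l)
    {x : Site} (hx : x ∉ lamBox l) : (l1Comp ((↑C : Set Site)ᶜ) x).Infinite := by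
  rw [mem_lamBox] at hx
  push_neg at hx
  have main : ∀ v : Site, |v.1| + |v.2| = 1 →
      (∀ t : ℕ, ((x.1 + t * v.1, x.2 + t * v.2) : Site) ∉ lamBox l) →
      (l1Comp ((↑C : Set Site)ᶜ) x).Infinite := by
    intro v hv hout
    exact ray_infinite v hv (fun t => fun hmem => hout t (hC _ hmem))
  have ht0 : ∀ t : ℕ, (t:ℤ) ≥ 0 := fun t => Int.natCast_nonneg t
  by_cases h1 : x.1 < lamLo l
  · exact main (-1, 0) (by norm_num) (fun t ht => by
      rw [mem_lamBox] at ht; simp at ht; have := ht0 t; omega)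
  by_cases h2 : lamHi l < x.1
  · exact main (1, 0) (by norm_num) (fun t ht => by
      rw [mem_lamBox] at ht; simp at ht; have := ht0 t; omega)
  by_cases h3 : x.2 < lamLo l
  · exact main (0, -1) (by norm_num) (fun t ht => by
      rw [mem_lamBox] at ht; simp at ht; have := ht0 t; omega)
  have h4 : lamHi l < x.2 := by
    have := hx (by omega) (by omega) (by omega); omega
  exact main (0, 1) (by norm_num) (fun t ht => by
      rw [mem_lamBox] at ht; simp at ht; have := ht0 t; omega)
/-! Group D: region facts -/

section Region
variable {l : ℕ} {σ : Site → ℤ} {ε : ℤ}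

lemma cluster_sub {C : Finset Site} (hC : IsCluster l σ ε C) : ∀ z ∈ C, z ∈ lamBox l :=
  fun z hz => (hC.2.1 z hz).1

lemma region_sub {Θ C : Finset Site} (hC : IsCluster l σ ε C) (hfill : (↑Θ : Set Site) = fill C) :
    Θ ⊆ lamBox l := by
  intro x hx
  by_contra hxb
  have hxf : x ∈ fill C := by rw [← hfill]; exact_mod_cast hx
  rcases mem_fill.1 hxf with h | h
  · exact hxb (cluster_sub hC x h)
  · exact (comp_infinite_of_outside (cluster_sub hC) hxb) h

/-- a site of `Θ` adjacent to a site outside `Θ` belongs to the cluster. -/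
lemma bd_in_cluster {Θ C : Finset Site} (hC : IsCluster l σ ε C)
    (hfill : (↑Θ : Set Site) = fill C) {x y : Site} (hx : x ∈ Θ) (hy : y ∈ nbrs x)
    (hyΘ : y ∉ Θ) : x ∈ C := by
  by_contra hxC
  have hxf : x ∈ fill C := by rw [← hfill]; exact_mod_cast hx
  have hyf : y ∉ fill C := by rw [← hfill]; exact_mod_cast hyΘ
  rcases mem_fill.1 hxf with h | hfin
  · exact hxC h
  have hyC : y ∉ C := fun h => hyf (mem_fill.2 (Or.inl h))
  have hinf : ¬ (l1Comp ((↑C : Set Site)ᶜ) y).Finite := fun h => hyf (mem_fill.2 (Or.inr h))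
  have : l1Comp ((↑C : Set Site)ᶜ) x = l1Comp ((↑C : Set Site)ᶜ) y :=
    l1Comp_eq_of_adj (by simpa using hxC) (by simpa using hyC) (d1_of_mem_nbrs hy)
  exact hinf (this ▸ hfin)

/-- outside neighbour in the box has opposite spin. -/
lemma bd_spin_out (hσ : ∀ x ∈ lamBox l, σ x = 1 ∨ σ x = -1) (hε : ε = 1 ∨ ε = -1)
    {Θ C : Finset Site} (hC : IsCluster l σ ε C)
    (hfill : (↑Θ : Set Site) = fill C) {x y : Site} (hx : x ∈ Θ) (hy : y ∈ nbrs x)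
    (hyΘ : y ∉ Θ) (hyL : y ∈ lamBox l) : σ x * σ y = -1 := by
  have hxC : x ∈ C := bd_in_cluster hC hfill hx hy hyΘ
  have hxε : σ x = ε := (hC.2.1 x hxC).2
  have hyε : σ y ≠ ε := by
    intro h
    have hyC : y ∈ C := hC.2.2.2 y hyL h ⟨x, hxC, d1_of_mem_nbrs hy⟩
    have hyf : y ∈ fill C := mem_fill.2 (Or.inl hyC)
    rw [← hfill] at hyf
    exact hyΘ (by exact_mod_cast hyf)
  rcases hσ y hyL with h | h <;> rcases hε with h' | h' <;>
    first
      | (rw [hxε, h, h']; norm_num; done)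
      | (exact absurd (h.trans h'.symm) hyε)

lemma walk_in_cluster {C' : Finset Site} (hC' : IsCluster l σ ε C') :
    ∀ L : List Site, L.Chain' (fun a b => d1 a b = 1) →
      (∀ a ∈ L, a ∈ lamBox l ∧ σ a = ε) → (∀ a ∈ L.head?, a ∈ C') → ∀ a ∈ L, a ∈ C' := by
  intro L
  induction L with
  | nil => intro _ _ _ a ha; simp at ha
  | cons a t ih =>
    intro hc hmem hhead b hb
    have haC : a ∈ C' := hhead a rfl
    rcases List.mem_cons.1 hb with rfl | hbt
    · exact haC
    cases t with
    | nil => simp at hbt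
    | cons c t' =>
      have hcC : c ∈ C' := by
        have hd : d1 a c = 1 := (List.isChain_cons_cons.1 hc).1
        have hcm := hmem c (by simp)
        exact hC'.2.2.2 c hcm.1 hcm.2 ⟨a, haC, hd⟩
      exact ih (List.isChain_cons_cons.1 hc).2 (fun z hz => hmem z (by simp [hz])) (by simpa using hcC)
        b hbt

/-- two clusters sharing a point are equal. -/
lemma cluster_eq_of_mem {C C' : Finset Site} (hC : IsCluster l σ ε C) (hC' : IsCluster l σ ε C')
    {z : Site} (hz : z ∈ C) (hz' : z ∈ C') : C = C' := by
  have main : ∀ (A B : Finset Site), IsCluster l σ ε A → IsCluster l σ ε B →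
      ∀ w : Site, w ∈ A → w ∈ B → A ⊆ B := by
    intro A B hA hB w hwA hwB u huA
    obtain ⟨L, hc, hh, hl, hmem⟩ := hA.2.2.1 w (by simpa using hwA) u (by simpa using huA)
    have : ∀ a ∈ L, a ∈ B := by
      refine walk_in_cluster hB L hc (fun a ha => hA.2.1 a (by simpa using hmem a ha)) ?_
      intro a ha
      rw [hh] at ha
      simp at ha
      subst ha
      exact hwB
    exact this u (List.mem_of_getLast? hl)
  exact le_antisymm (main C C' hC hC' z hz hz') (main C' C hC' hC z hz' hz)

/-- distinct regions have disjoint clusters. -/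
lemma clusters_disjoint {Θ Θ' C C' : Finset Site} (hC : IsCluster l σ ε C)
    (hC' : IsCluster l σ ε C') (hfill : (↑Θ : Set Site) = fill C)
    (hfill' : (↑Θ' : Set Site) = fill C') (hne : Θ ≠ Θ') {z : Site} (hz : z ∈ C) : z ∉ C' := by
  intro hz'
  have : C = C' := cluster_eq_of_mem hC hC' hz hz'
  subst this
  exact hne (Finset.coe_injective (hfill.trans hfill'.symm))

/-- non-interaction, interior pairs. -/
lemma nonint_in (hσ : ∀ x ∈ lamBox l, σ x = 1 ∨ σ x = -1)
    {Θ Θ' C C' : Finset Site} (hC : IsCluster l σ ε C) (hC' : IsCluster l σ ε C')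
    (hfill : (↑Θ : Set Site) = fill C) (hfill' : (↑Θ' : Set Site) = fill C') (hne : Θ ≠ Θ')
    {x y : Site} (hx : x ∈ Θ) (hy : y ∈ nbrs x) (hyΘ : y ∉ Θ) (hyL : y ∈ lamBox l) :
    (x ∈ Θ' ↔ y ∈ Θ') := by
  have hxC : x ∈ C := bd_in_cluster hC hfill hx hy hyΘ
  have hxC' : x ∉ C' := clusters_disjoint hC hC' hfill hfill' hne hxC
  have hyC' : y ∉ C' := by
    intro h
    have hyε : σ y = ε := (hC'.2.1 y h).2
    have hyC : y ∈ C := hC.2.2.2 y hyL hyε ⟨x, hxC, d1_of_mem_nbrs hy⟩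
    have hyf : y ∈ fill C := mem_fill.2 (Or.inl hyC)
    rw [← hfill] at hyf
    exact hyΘ (by exact_mod_cast hyf)
  have hcomp : l1Comp ((↑C' : Set Site)ᶜ) x = l1Comp ((↑C' : Set Site)ᶜ) y :=
    l1Comp_eq_of_adj (by simpa using hxC') (by simpa using hyC') (d1_of_mem_nbrs hy)
  constructor
  · intro hxΘ'
    have hxf : x ∈ fill C' := by rw [← hfill']; exact_mod_cast hxΘ'
    rcases mem_fill.1 hxf with h | h
    · exact absurd h hxC'
    have : y ∈ fill C' := mem_fill.2 (Or.inr (hcomp ▸ h))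
    rw [← hfill'] at this; exact_mod_cast this
  · intro hyΘ'
    have hyf : y ∈ fill C' := by rw [← hfill']; exact_mod_cast hyΘ'
    rcases mem_fill.1 hyf with h | h
    · exact absurd h hyC'
    have : x ∈ fill C' := mem_fill.2 (Or.inr (hcomp.symm ▸ h))
    rw [← hfill'] at this; exact_mod_cast this

/-- non-interaction, exterior pairs. -/
lemma nonint_out {Θ Θ' C C' : Finset Site} (hC : IsCluster l σ ε C) (hC' : IsCluster l σ ε C')
    (hfill : (↑Θ : Set Site) = fill C) (hfill' : (↑Θ' : Set Site) = fill C') (hne : Θ ≠ Θ')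
    {x y : Site} (hx : x ∈ Θ) (hy : y ∈ nbrs x) (hyL : y ∉ lamBox l) : x ∉ Θ' := by
  have hyΘ : y ∉ Θ := fun h => hyL (region_sub hC hfill h)
  have hxC : x ∈ C := bd_in_cluster hC hfill hx hy hyΘ
  have hxC' : x ∉ C' := clusters_disjoint hC hC' hfill hfill' hne hxC
  have hyC' : y ∉ C' := fun h => hyL (cluster_sub hC' y h)
  have hcomp : l1Comp ((↑C' : Set Site)ᶜ) x = l1Comp ((↑C' : Set Site)ᶜ) y :=
    l1Comp_eq_of_adj (by simpa using hxC') (by simpa using hyC') (d1_of_mem_nbrs hy)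
  intro hxΘ'
  have hxf : x ∈ fill C' := by rw [← hfill']; exact_mod_cast hxΘ'
  rcases mem_fill.1 hxf with h | h
  · exact hxC' h
  rw [hcomp] at h
  exact comp_infinite_of_outside (cluster_sub hC') hyL h

end Region
/-! Group E: boundary pair sets -/

noncomputable def pin (l : ℕ) (Θ : Finset Site) : Finset (Site × Site) :=
  Θ.biUnion fun x => ((nbrs x).filter fun y => y ∈ lamBox l ∧ y ∉ Θ).image (Prod.mk x)

noncomputable def pout (l : ℕ) (Θ : Finset Site) : Finset (Site × Site) :=
  Θ.biUnion fun x => ((nbrs x).filter fun y => y ∉ lamBox l).image (Prod.mk x)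

lemma mem_pin {l : ℕ} {Θ : Finset Site} {p : Site × Site} :
    p ∈ pin l Θ ↔ p.1 ∈ Θ ∧ p.2 ∈ nbrs p.1 ∧ p.2 ∈ lamBox l ∧ p.2 ∉ Θ := by
  obtain ⟨x, y⟩ := p
  simp only [pin, Finset.mem_biUnion, Finset.mem_image, Finset.mem_filter, Prod.mk.injEq]
  constructor
  · rintro ⟨a, ha, b, ⟨hb1, hb2, hb3⟩, rfl, rfl⟩
    exact ⟨ha, hb1, hb2, hb3⟩
  · rintro ⟨h1, h2, h3, h4⟩
    exact ⟨x, h1, y, ⟨h2, h3, h4⟩, rfl, rfl⟩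

lemma mem_pout {l : ℕ} {Θ : Finset Site} {p : Site × Site} :
    p ∈ pout l Θ ↔ p.1 ∈ Θ ∧ p.2 ∈ nbrs p.1 ∧ p.2 ∉ lamBox l := by
  obtain ⟨x, y⟩ := p
  simp only [pout, Finset.mem_biUnion, Finset.mem_image, Finset.mem_filter, Prod.mk.injEq]
  constructor
  · rintro ⟨a, ha, b, ⟨hb1, hb2⟩, rfl, rfl⟩
    exact ⟨ha, hb1, hb2⟩
  · rintro ⟨h1, h2, h3⟩
    exact ⟨x, h1, y, ⟨h2, h3⟩, rfl, rfl⟩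

lemma sum_pairs {M : Type*} [AddCommMonoid M] (Θ : Finset Site) (s : Site → Finset Site)
    (f : Site × Site → M) :
    ((Θ.biUnion fun x => (s x).image (Prod.mk x)).sum f) = ∑ x ∈ Θ, ∑ y ∈ s x, f (x, y) := by
  rw [Finset.sum_biUnion]
  · exact Finset.sum_congr rfl fun x _ => Finset.sum_image (by simp)
  · intro a _ b _ hab
    simp only [Finset.disjoint_left]
    intro p hp hq
    simp only [Finset.mem_image] at hp hq
    obtain ⟨y, _, rfl⟩ := hp
    obtain ⟨z, _, h⟩ := hq
    exact hab ((Prod.ext_iff.1 h).1).symm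

lemma disj_pin_pout {l : ℕ} {Θ : Finset Site} : Disjoint (pin l Θ) (pout l Θ) := by
  simp only [Finset.disjoint_left]
  intro p hp hq
  exact (mem_pout.1 hq).2.2 (mem_pin.1 hp).2.2.1

lemma mem_union_facts {l : ℕ} {Θ : Finset Site} (hΘ : Θ ⊆ lamBox l) {p : Site × Site}
    (hp : p ∈ pin l Θ ∪ pout l Θ) : p.1 ∈ Θ ∧ p.2 ∈ nbrs p.1 ∧ p.2 ∉ Θ := by
  rcases Finset.mem_union.1 hp with h | h
  · exact ⟨(mem_pin.1 h).1, (mem_pin.1 h).2.1, (mem_pin.1 h).2.2.2⟩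
  · exact ⟨(mem_pout.1 h).1, (mem_pout.1 h).2.1,
      fun hc => (mem_pout.1 h).2.2 (hΘ hc)⟩

lemma dual_injOn {l : ℕ} {Θ : Finset Site} (hΘ : Θ ⊆ lamBox l) :
    Set.InjOn (fun p : Site × Site => dualBond p.1 p.2) ↑(pin l Θ ∪ pout l Θ) := by
  intro p hp q hq he
  obtain ⟨hp1, hp2, hp3⟩ := mem_union_facts hΘ (by simpa using hp)
  obtain ⟨hq1, hq2, hq3⟩ := mem_union_facts hΘ (by simpa using hq)
  rcases dual_inj hp2 hq2 he with ⟨h1, h2⟩ | ⟨h1, h2⟩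
  · exact Prod.ext h1 h2
  · exact absurd (h1 ▸ hp1) hq3

lemma contour_eq_image {l : ℕ} {Θ : Finset Site} (hΘ : Θ ⊆ lamBox l) :
    contourOf Θ = (pin l Θ ∪ pout l Θ).image (fun p => dualBond p.1 p.2) := by
  ext e
  simp only [contourOf, Finset.mem_biUnion, Finset.mem_image, Finset.mem_filter,
    Finset.mem_union]
  constructor
  · rintro ⟨x, hx, y, ⟨hy, hyΘ⟩, rfl⟩
    by_cases hyL : y ∈ lamBox l
    · exact ⟨(x, y), Or.inl (mem_pin.2 ⟨hx, hy, hyL, hyΘ⟩), rfl⟩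
    · exact ⟨(x, y), Or.inr (mem_pout.2 ⟨hx, hy, hyL⟩), rfl⟩
  · rintro ⟨p, hp | hp, rfl⟩
    · exact ⟨p.1, (mem_pin.1 hp).1, p.2, ⟨(mem_pin.1 hp).2.1, (mem_pin.1 hp).2.2.2⟩, rfl⟩
    · exact ⟨p.1, (mem_pout.1 hp).1, p.2,
        ⟨(mem_pout.1 hp).2.1, fun hc => (mem_pout.1 hp).2.2 (hΘ hc)⟩, rfl⟩

lemma card_contour {l : ℕ} {Θ : Finset Site} (hΘ : Θ ⊆ lamBox l) :
    (contourOf Θ).card = (pin l Θ).card + (pout l Θ).card := by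
  rw [contour_eq_image hΘ, Finset.card_image_of_injOn (dual_injOn hΘ),
    Finset.card_union_of_disjoint disj_pin_pout]

lemma inter_boxBdry_eq {l : ℕ} {Θ : Finset Site} (hΘ : Θ ⊆ lamBox l) :
    contourOf Θ ∩ boxBdry l = (pout l Θ).image (fun p => dualBond p.1 p.2) := by
  ext e
  constructor
  · intro he
    obtain ⟨he1, he2⟩ := Finset.mem_inter.1 he
    rw [contour_eq_image hΘ] at he1
    obtain ⟨p, hp, rfl⟩ := Finset.mem_image.1 he1
    simp only [boxBdry, contourOf, Finset.mem_biUnion, Finset.mem_image,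
      Finset.mem_filter] at he2
    obtain ⟨u, hu, v, ⟨hv, hvL⟩, hd⟩ := he2
    obtain ⟨hp1, hp2, hp3⟩ := mem_union_facts hΘ hp
    rcases dual_inj hv hp2 hd with ⟨h1, h2⟩ | ⟨h1, h2⟩
    · refine Finset.mem_image.2 ⟨p, mem_pout.2 ⟨hp1, hp2, h2 ▸ hvL⟩, rfl⟩
    · exact absurd (h2 ▸ hΘ hp1) hvL
  · intro he
    obtain ⟨p, hp, rfl⟩ := Finset.mem_image.1 he
    obtain ⟨hp1, hp2, hp3⟩ := mem_pout.1 hp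
    refine Finset.mem_inter.2 ⟨?_, ?_⟩
    · rw [contour_eq_image hΘ]
      exact Finset.mem_image.2 ⟨p, Finset.mem_union_right _ hp, rfl⟩
    · simp only [boxBdry, contourOf, Finset.mem_biUnion, Finset.mem_image, Finset.mem_filter]
      exact ⟨p.1, hΘ hp1, p.2, ⟨hp2, hp3⟩, rfl⟩

lemma card_inter_boxBdry {l : ℕ} {Θ : Finset Site} (hΘ : Θ ⊆ lamBox l) :
    (contourOf Θ ∩ boxBdry l).card = (pout l Θ).card := by
  rw [inter_boxBdry_eq hΘ]
  exact Finset.card_image_of_injOn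
    ((dual_injOn hΘ).mono (Finset.coe_subset.2 Finset.subset_union_right))
/-! Group F: geometry of non-crossing contours -/

open Classical in
lemma int_walk {lo hi : ℤ} (P : ℤ → Prop) (hrange : lo ≤ hi) (hlo : P lo) (hhi : ¬ P hi) :
    ∃ a, lo ≤ a ∧ a < hi ∧ P a ∧ ¬ P (a+1) := by
  classical
  set T := (Finset.Icc lo hi).filter (fun t => ¬ P t) with hTdef
  have hne : T.Nonempty := ⟨hi, by simp [hTdef, hrange, hhi]⟩
  set a' := T.min' hne with ha'def
  have ha'T : a' ∈ T := T.min'_mem hne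
  simp only [hTdef, Finset.mem_filter, Finset.mem_Icc] at ha'T
  obtain ⟨⟨hl1, hl2⟩, hnP⟩ := ha'T
  have hlo' : lo < a' := by
    rcases eq_or_lt_of_le hl1 with h | h
    · exact absurd (h ▸ hlo) hnP
    · exact h
  refine ⟨a' - 1, by omega, by omega, ?_, by simpa using hnP⟩
  by_contra hP
  have : a' - 1 ∈ T := by simp [hTdef, Finset.mem_Icc]; exact ⟨⟨by omega, by omega⟩, hP⟩
  have := T.min'_le _ this
  omega

section Walks
variable {l : ℕ} {Θ : Finset Site}

lemma hfind (hΘ : Θ ⊆ lamBox l) {b : ℤ}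
    (h : (((lamLo l, b) : Site) ∈ Θ ∧ ((lamHi l, b) : Site) ∉ Θ) ∨
         (((lamLo l, b) : Site) ∉ Θ ∧ ((lamHi l, b) : Site) ∈ Θ)) :
    ∃ q ∈ pin l Θ, q.1.2 = b ∧ q.2.2 = b ∧ q.1.1 ≠ q.2.1 := by
  have hb : lamLo l ≤ b ∧ b ≤ lamHi l := by
    rcases h with ⟨h1, _⟩ | ⟨_, h1⟩ <;>
      · have := mem_lamBox.1 (hΘ h1); simp at this; tauto
  have hrange : lamLo l ≤ lamHi l := by omega
  rcases h with ⟨h1, h2⟩ | ⟨h1, h2⟩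
  · obtain ⟨a, ha1, ha2, ha3, ha4⟩ := int_walk (fun t => ((t, b) : Site) ∈ Θ) hrange h1 h2
    refine ⟨((a, b), (a+1, b)), mem_pin.2 ⟨ha3, ?_, ?_, ha4⟩, rfl, rfl, by simp⟩
    · simp [mem_nbrs]
    · rw [mem_lamBox]
      have := mem_lamBox.1 (hΘ ha3)
      simp at this ⊢
      omega
  · obtain ⟨a, ha1, ha2, ha3, ha4⟩ := int_walk (fun t => ((t, b) : Site) ∉ Θ) hrange h1 (by simpa using h2)
    have ha4' : ((a+1, b) : Site) ∈ Θ := not_not.1 ha4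
    refine ⟨((a+1, b), (a, b)), mem_pin.2 ⟨ha4', ?_, ?_, ha3⟩, rfl, rfl, by simp⟩
    · simp [mem_nbrs, Prod.ext_iff]
    · rw [mem_lamBox]
      have := mem_lamBox.1 (hΘ ha4')
      simp at this ⊢
      omega

lemma vfind (hΘ : Θ ⊆ lamBox l) {b : ℤ}
    (h : (((b, lamLo l) : Site) ∈ Θ ∧ ((b, lamHi l) : Site) ∉ Θ) ∨
         (((b, lamLo l) : Site) ∉ Θ ∧ ((b, lamHi l) : Site) ∈ Θ)) :
    ∃ q ∈ pin l Θ, q.1.1 = b ∧ q.2.1 = b ∧ q.1.2 ≠ q.2.2 := by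
  have hb : lamLo l ≤ b ∧ b ≤ lamHi l := by
    rcases h with ⟨h1, _⟩ | ⟨_, h1⟩ <;>
      · have := mem_lamBox.1 (hΘ h1); simp at this; tauto
  have hrange : lamLo l ≤ lamHi l := by omega
  rcases h with ⟨h1, h2⟩ | ⟨h1, h2⟩
  · obtain ⟨a, ha1, ha2, ha3, ha4⟩ := int_walk (fun t => ((b, t) : Site) ∈ Θ) hrange h1 h2
    refine ⟨((b, a), (b, a+1)), mem_pin.2 ⟨ha3, ?_, ?_, ha4⟩, rfl, rfl, by simp⟩
    · simp [mem_nbrs]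
    · rw [mem_lamBox]
      have := mem_lamBox.1 (hΘ ha3)
      simp at this ⊢
      omega
  · obtain ⟨a, ha1, ha2, ha3, ha4⟩ := int_walk (fun t => ((b, t) : Site) ∉ Θ) hrange h1 (by simpa using h2)
    have ha4' : ((b, a+1) : Site) ∈ Θ := not_not.1 ha4
    refine ⟨((b, a+1), (b, a)), mem_pin.2 ⟨ha4', ?_, ?_, ha3⟩, rfl, rfl, by simp⟩
    · simp [mem_nbrs, Prod.ext_iff]
    · rw [mem_lamBox]
      have := mem_lamBox.1 (hΘ ha4')
      simp at this ⊢
      omega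

end Walks
/-! Group G: non-crossing gives |pout| ≤ |pin| -/

section NC
variable {l : ℕ} {Θ : Finset Site}

lemma dual_mem_contour {x y : Site} (hx : x ∈ Θ) (hy : y ∈ nbrs x) (hyΘ : y ∉ Θ) :
    dualBond x y ∈ contourOf Θ := by
  simp only [contourOf, Finset.mem_biUnion, Finset.mem_image, Finset.mem_filter]
  exact ⟨x, hx, y, ⟨hy, hyΘ⟩, rfl⟩

lemma avoid1 (hΘ : Θ ⊆ lamBox l) (h : ¬ touches l 1 (contourOf Θ)) :
    ∀ b, ((lamHi l, b) : Site) ∉ Θ := by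
  intro b hb
  have hbox := mem_lamBox.1 (hΘ hb)
  simp only at hbox
  have hy : ((lamHi l + 1, b) : Site) ∈ nbrs ((lamHi l, b) : Site) := by
    simp [mem_nbrs]
  have hyΘ : ((lamHi l + 1, b) : Site) ∉ Θ := fun h' => by
    have := mem_lamBox.1 (hΘ h'); simp only at this; omega
  apply h
  refine ⟨dualBond ((lamHi l, b) : Site) ((lamHi l + 1, b) : Site),
    dual_mem_contour hb hy hyΘ, ((lamHi l, b) : Site), ?_, ?_⟩
  · rw [show ((lamHi l + 1, b) : Site) = (((lamHi l, b) : Site).1 + 1, ((lamHi l, b) : Site).2) from rfl,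
      dualBond_right]
    simp
  · exact Or.inl ⟨rfl, rfl, by omega, by omega⟩

lemma avoid_m1 (hΘ : Θ ⊆ lamBox l) (h : ¬ touches l (-1) (contourOf Θ)) :
    ∀ b, ((lamLo l, b) : Site) ∉ Θ := by
  intro b hb
  have hbox := mem_lamBox.1 (hΘ hb)
  simp only at hbox
  have hy : ((lamLo l - 1, b) : Site) ∈ nbrs ((lamLo l, b) : Site) := by
    simp [mem_nbrs]
  have hyΘ : ((lamLo l - 1, b) : Site) ∉ Θ := fun h' => by
    have := mem_lamBox.1 (hΘ h'); simp only at this; omega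
  apply h
  refine ⟨dualBond ((lamLo l, b) : Site) ((lamLo l - 1, b) : Site),
    dual_mem_contour hb hy hyΘ, ((lamLo l - 1, b) : Site), ?_, ?_⟩
  · rw [show ((lamLo l - 1, b) : Site) = (((lamLo l, b) : Site).1 - 1, ((lamLo l, b) : Site).2) from rfl,
      dualBond_left]
    simp
  · exact Or.inr (Or.inl ⟨rfl, rfl, by omega, by omega⟩)

lemma avoid2 (hΘ : Θ ⊆ lamBox l) (h : ¬ touches l 2 (contourOf Θ)) :
    ∀ b, ((b, lamHi l) : Site) ∉ Θ := by
  intro b hb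
  have hbox := mem_lamBox.1 (hΘ hb)
  simp only at hbox
  have hy : ((b, lamHi l + 1) : Site) ∈ nbrs ((b, lamHi l) : Site) := by
    simp [mem_nbrs]
  have hyΘ : ((b, lamHi l + 1) : Site) ∉ Θ := fun h' => by
    have := mem_lamBox.1 (hΘ h'); simp only at this; omega
  apply h
  refine ⟨dualBond ((b, lamHi l) : Site) ((b, lamHi l + 1) : Site),
    dual_mem_contour hb hy hyΘ, ((b, lamHi l) : Site), ?_, ?_⟩
  · rw [show ((b, lamHi l + 1) : Site) = (((b, lamHi l) : Site).1, ((b, lamHi l) : Site).2 + 1) from rfl,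
      dualBond_up]
    simp
  · exact Or.inr (Or.inr (Or.inl ⟨rfl, rfl, by omega, by omega⟩))

lemma avoid_m2 (hΘ : Θ ⊆ lamBox l) (h : ¬ touches l (-2) (contourOf Θ)) :
    ∀ b, ((b, lamLo l) : Site) ∉ Θ := by
  intro b hb
  have hbox := mem_lamBox.1 (hΘ hb)
  simp only at hbox
  have hy : ((b, lamLo l - 1) : Site) ∈ nbrs ((b, lamLo l) : Site) := by
    simp [mem_nbrs]
  have hyΘ : ((b, lamLo l - 1) : Site) ∉ Θ := fun h' => by
    have := mem_lamBox.1 (hΘ h'); simp only at this; omega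
  apply h
  refine ⟨dualBond ((b, lamLo l) : Site) ((b, lamLo l - 1) : Site),
    dual_mem_contour hb hy hyΘ, ((b, lamLo l - 1) : Site), ?_, ?_⟩
  · rw [show ((b, lamLo l - 1) : Site) = (((b, lamLo l) : Site).1, ((b, lamLo l) : Site).2 - 1) from rfl,
      dualBond_down]
    simp
  · exact Or.inr (Or.inr (Or.inr ⟨rfl, rfl, by omega, by omega⟩))

lemma exit_cases (hΘ : Θ ⊆ lamBox l) {p : Site × Site} (hp : p ∈ pout l Θ) :
    (p.1.1 = lamHi l ∧ p.2 = (p.1.1 + 1, p.1.2)) ∨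
    (p.1.1 = lamLo l ∧ p.2 = (p.1.1 - 1, p.1.2)) ∨
    (p.1.2 = lamHi l ∧ p.2 = (p.1.1, p.1.2 + 1)) ∨
    (p.1.2 = lamLo l ∧ p.2 = (p.1.1, p.1.2 - 1)) := by
  obtain ⟨h1, h2, h3⟩ := mem_pout.1 hp
  have hbox := mem_lamBox.1 (hΘ h1)
  rcases mem_nbrs.1 h2 with h | h | h | h <;> rw [h, mem_lamBox] at h3 <;>
    simp only [not_and, not_le] at h3
  · exact Or.inl ⟨by omega, h⟩
  · exact Or.inr (Or.inl ⟨by omega, h⟩)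
  · exact Or.inr (Or.inr (Or.inl ⟨by omega, h⟩))
  · exact Or.inr (Or.inr (Or.inr ⟨by omega, h⟩))

lemma card_le_of_key (aH bH aV bV : ℤ)
    (hkey : ∀ p ∈ pout l Θ, ∃ q ∈ pin l Θ,
      (q.1.2 = q.2.2 ∧ q.1.1 ≠ q.2.1 ∧ p = ((aH, q.1.2), (bH, q.1.2))) ∨
      (q.1.1 = q.2.1 ∧ q.1.2 ≠ q.2.2 ∧ p = ((q.1.1, aV), (q.1.1, bV)))) :
    (pout l Θ).card ≤ (pin l Θ).card := by
  classical
  have hchoice : ∀ p : Site × Site, ∃ q : Site × Site, p ∈ pout l Θ → (q ∈ pin l Θ ∧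
      ((q.1.2 = q.2.2 ∧ q.1.1 ≠ q.2.1 ∧ p = ((aH, q.1.2), (bH, q.1.2))) ∨
       (q.1.1 = q.2.1 ∧ q.1.2 ≠ q.2.2 ∧ p = ((q.1.1, aV), (q.1.1, bV))))) := by
    intro p
    by_cases h : p ∈ pout l Θ
    · obtain ⟨q, hq, hs⟩ := hkey p h
      exact ⟨q, fun _ => ⟨hq, hs⟩⟩
    · exact ⟨p, fun h' => absurd h' h⟩
  choose f hf using hchoice
  apply Finset.card_le_card_of_injOn f (fun p hp => (hf p hp).1)
  intro p hp p' hp' heq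
  simp only [Finset.mem_coe] at hp hp'
  obtain ⟨hq, hs⟩ := hf p hp
  obtain ⟨hq', hs'⟩ := hf p' hp'
  rw [heq] at hs
  rcases hs with ⟨a1, a2, a3⟩ | ⟨a1, a2, a3⟩ <;> rcases hs' with ⟨c1, c2, c3⟩ | ⟨c1, c2, c3⟩
  · exact a3.trans c3.symm
  · exact absurd c1 a2
  · exact absurd a1 c2
  · exact a3.trans c3.symm

lemma pout_card_le_pin (hΘ : Θ ⊆ lamBox l) (hnc : NonCrossing l (contourOf Θ)) :
    (pout l Θ).card ≤ (pin l Θ).card := by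
  have hH : ¬ touches l 1 (contourOf Θ) ∨ ¬ touches l (-1) (contourOf Θ) := by
    by_contra h
    push_neg at h
    exact hnc (Or.inl ⟨not_not.1 (fun hc => hc h.1) , not_not.1 (fun hc => hc h.2)⟩)
  have hV : ¬ touches l 2 (contourOf Θ) ∨ ¬ touches l (-2) (contourOf Θ) := by
    by_contra h
    push_neg at h
    exact hnc (Or.inr ⟨not_not.1 (fun hc => hc h.1), not_not.1 (fun hc => hc h.2)⟩)
  rcases hH with hH | hH <;> rcases hV with hV | hV
  · -- avoid right column, avoid top row
    apply card_le_of_key (lamLo l) (lamLo l - 1) (lamLo l) (lamLo l - 1)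
    intro p hp
    have hp1 : p.1 ∈ Θ := (mem_pout.1 hp).1
    rcases exit_cases hΘ hp with ⟨h, hy⟩ | ⟨h, hy⟩ | ⟨h, hy⟩ | ⟨h, hy⟩
    · exact absurd ((Prod.ext h rfl : p.1 = (lamHi l, p.1.2)) ▸ hp1) (avoid1 hΘ hH p.1.2)
    · obtain ⟨q, hq, hb1, hb2, hne⟩ := hfind hΘ
        (Or.inl ⟨(Prod.ext h rfl : p.1 = (lamLo l, p.1.2)) ▸ hp1, avoid1 hΘ hH p.1.2⟩)
      refine ⟨q, hq, Or.inl ⟨hb1.trans hb2.symm, hne, ?_⟩⟩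
      rw [hb1]
      exact Prod.ext (Prod.ext h rfl) (by rw [hy, h])
    · exact absurd ((Prod.ext rfl h : p.1 = (p.1.1, lamHi l)) ▸ hp1) (avoid2 hΘ hV p.1.1)
    · obtain ⟨q, hq, hb1, hb2, hne⟩ := vfind hΘ
        (Or.inl ⟨(Prod.ext rfl h : p.1 = (p.1.1, lamLo l)) ▸ hp1, avoid2 hΘ hV p.1.1⟩)
      refine ⟨q, hq, Or.inr ⟨hb1.trans hb2.symm, hne, ?_⟩⟩
      rw [hb1]
      exact Prod.ext (Prod.ext rfl h) (by rw [hy, h])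
  · -- avoid right column, avoid bottom row
    apply card_le_of_key (lamLo l) (lamLo l - 1) (lamHi l) (lamHi l + 1)
    intro p hp
    have hp1 : p.1 ∈ Θ := (mem_pout.1 hp).1
    rcases exit_cases hΘ hp with ⟨h, hy⟩ | ⟨h, hy⟩ | ⟨h, hy⟩ | ⟨h, hy⟩
    · exact absurd ((Prod.ext h rfl : p.1 = (lamHi l, p.1.2)) ▸ hp1) (avoid1 hΘ hH p.1.2)
    · obtain ⟨q, hq, hb1, hb2, hne⟩ := hfind hΘ
        (Or.inl ⟨(Prod.ext h rfl : p.1 = (lamLo l, p.1.2)) ▸ hp1, avoid1 hΘ hH p.1.2⟩)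
      refine ⟨q, hq, Or.inl ⟨hb1.trans hb2.symm, hne, ?_⟩⟩
      rw [hb1]
      exact Prod.ext (Prod.ext h rfl) (by rw [hy, h])
    · obtain ⟨q, hq, hb1, hb2, hne⟩ := vfind hΘ
        (Or.inr ⟨avoid_m2 hΘ hV p.1.1, (Prod.ext rfl h : p.1 = (p.1.1, lamHi l)) ▸ hp1⟩)
      refine ⟨q, hq, Or.inr ⟨hb1.trans hb2.symm, hne, ?_⟩⟩
      rw [hb1]
      exact Prod.ext (Prod.ext rfl h) (by rw [hy, h])
    · exact absurd ((Prod.ext rfl h : p.1 = (p.1.1, lamLo l)) ▸ hp1) (avoid_m2 hΘ hV p.1.1)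
  · -- avoid left column, avoid top row
    apply card_le_of_key (lamHi l) (lamHi l + 1) (lamLo l) (lamLo l - 1)
    intro p hp
    have hp1 : p.1 ∈ Θ := (mem_pout.1 hp).1
    rcases exit_cases hΘ hp with ⟨h, hy⟩ | ⟨h, hy⟩ | ⟨h, hy⟩ | ⟨h, hy⟩
    · obtain ⟨q, hq, hb1, hb2, hne⟩ := hfind hΘ
        (Or.inr ⟨avoid_m1 hΘ hH p.1.2, (Prod.ext h rfl : p.1 = (lamHi l, p.1.2)) ▸ hp1⟩)
      refine ⟨q, hq, Or.inl ⟨hb1.trans hb2.symm, hne, ?_⟩⟩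
      rw [hb1]
      exact Prod.ext (Prod.ext h rfl) (by rw [hy, h])
    · exact absurd ((Prod.ext h rfl : p.1 = (lamLo l, p.1.2)) ▸ hp1) (avoid_m1 hΘ hH p.1.2)
    · exact absurd ((Prod.ext rfl h : p.1 = (p.1.1, lamHi l)) ▸ hp1) (avoid2 hΘ hV p.1.1)
    · obtain ⟨q, hq, hb1, hb2, hne⟩ := vfind hΘ
        (Or.inl ⟨(Prod.ext rfl h : p.1 = (p.1.1, lamLo l)) ▸ hp1, avoid2 hΘ hV p.1.1⟩)
      refine ⟨q, hq, Or.inr ⟨hb1.trans hb2.symm, hne, ?_⟩⟩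
      rw [hb1]
      exact Prod.ext (Prod.ext rfl h) (by rw [hy, h])
  · -- avoid left column, avoid bottom row
    apply card_le_of_key (lamHi l) (lamHi l + 1) (lamHi l) (lamHi l + 1)
    intro p hp
    have hp1 : p.1 ∈ Θ := (mem_pout.1 hp).1
    rcases exit_cases hΘ hp with ⟨h, hy⟩ | ⟨h, hy⟩ | ⟨h, hy⟩ | ⟨h, hy⟩
    · obtain ⟨q, hq, hb1, hb2, hne⟩ := hfind hΘ
        (Or.inr ⟨avoid_m1 hΘ hH p.1.2, (Prod.ext h rfl : p.1 = (lamHi l, p.1.2)) ▸ hp1⟩)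
      refine ⟨q, hq, Or.inl ⟨hb1.trans hb2.symm, hne, ?_⟩⟩
      rw [hb1]
      exact Prod.ext (Prod.ext h rfl) (by rw [hy, h])
    · exact absurd ((Prod.ext h rfl : p.1 = (lamLo l, p.1.2)) ▸ hp1) (avoid_m1 hΘ hH p.1.2)
    · obtain ⟨q, hq, hb1, hb2, hne⟩ := vfind hΘ
        (Or.inr ⟨avoid_m2 hΘ hV p.1.1, (Prod.ext rfl h : p.1 = (p.1.1, lamHi l)) ▸ hp1⟩)
      refine ⟨q, hq, Or.inr ⟨hb1.trans hb2.symm, hne, ?_⟩⟩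
      rw [hb1]
      exact Prod.ext (Prod.ext rfl h) (by rw [hy, h])
    · exact absurd ((Prod.ext rfl h : p.1 = (p.1.1, lamLo l)) ▸ hp1) (avoid_m2 hΘ hV p.1.1)

end NC
/-! Group H: Hamiltonian algebra -/

section HamAlg
variable {l : ℕ} {Θ : Finset Site} {ω : Site → ℝ}

noncomputable def pairsIn (l : ℕ) : Finset (Site × Site) :=
  (lamBox l).biUnion fun x => ((nbrs x).filter (· ∈ lamBox l)).image (Prod.mk x)

lemma mem_pairsIn {p : Site × Site} :
    p ∈ pairsIn l ↔ p.1 ∈ lamBox l ∧ p.2 ∈ nbrs p.1 ∧ p.2 ∈ lamBox l := by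
  obtain ⟨x, y⟩ := p
  simp only [pairsIn, Finset.mem_biUnion, Finset.mem_image, Finset.mem_filter, Prod.mk.injEq]
  constructor
  · rintro ⟨a, ha, b, ⟨hb1, hb2⟩, rfl, rfl⟩
    exact ⟨ha, hb1, hb2⟩
  · rintro ⟨h1, h2, h3⟩
    exact ⟨x, h1, y, ⟨h2, h3⟩, rfl, rfl⟩

lemma Ham_eq (τ : Site → ℤ) :
    Ham l ω τ = -(1/2) * ∑ p ∈ pairsIn l, ((τ p.1 * τ p.2 : ℤ) : ℝ) -
      ∑ x ∈ lamBox l, ∑ y ∈ (nbrs x).filter (· ∉ lamBox l), (τ x : ℝ) * ω y := by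
  rw [Ham, pairsIn, sum_pairs]

lemma sum_pairsIn_swap (f : Site × Site → ℝ) :
    ∑ p ∈ pairsIn l, f p = ∑ p ∈ pairsIn l, f p.swap := by
  refine Finset.sum_nbij' Prod.swap Prod.swap ?_ ?_ ?_ ?_ ?_
  · intro p hp
    obtain ⟨h1, h2, h3⟩ := mem_pairsIn.1 hp
    exact mem_pairsIn.2 ⟨h3, nbrs_symm h2, h1⟩
  · intro p hp
    obtain ⟨h1, h2, h3⟩ := mem_pairsIn.1 hp
    exact mem_pairsIn.2 ⟨h3, nbrs_symm h2, h1⟩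
  · intro p _; simp
  · intro p _; simp
  · intro p _; simp

lemma flip_diff (hΘ : Θ ⊆ lamBox l) (τ : Site → ℤ) :
    Ham l ω τ - Ham l ω (flipC Θ τ) =
      -2 * ∑ p ∈ pin l Θ, ((τ p.1 * τ p.2 : ℤ) : ℝ) -
      2 * ∑ p ∈ pout l Θ, (τ p.1 : ℝ) * ω p.2 := by
  classical
  rw [Ham_eq τ, Ham_eq (flipC Θ τ)]
  have hA : ∑ p ∈ pairsIn l, ((τ p.1 * τ p.2 : ℤ) : ℝ) -
      ∑ p ∈ pairsIn l, ((flipC Θ τ p.1 * flipC Θ τ p.2 : ℤ) : ℝ) =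
      4 * ∑ p ∈ pin l Θ, ((τ p.1 * τ p.2 : ℤ) : ℝ) := by
    rw [← Finset.sum_sub_distrib]
    have hpt : ∀ p ∈ pairsIn l,
        ((τ p.1 * τ p.2 : ℤ) : ℝ) - ((flipC Θ τ p.1 * flipC Θ τ p.2 : ℤ) : ℝ) =
        (if p.1 ∈ Θ ∧ p.2 ∉ Θ then 2 * ((τ p.1 * τ p.2 : ℤ) : ℝ) else 0) +
        (if p.2 ∈ Θ ∧ p.1 ∉ Θ then 2 * ((τ p.1 * τ p.2 : ℤ) : ℝ) else 0) := by
      intro p _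
      by_cases h1 : p.1 ∈ Θ <;> by_cases h2 : p.2 ∈ Θ <;>
        simp [flipC, h1, h2] <;> push_cast <;> ring
    rw [Finset.sum_congr rfl hpt, Finset.sum_add_distrib]
    have e1 : ∑ p ∈ pairsIn l, (if p.1 ∈ Θ ∧ p.2 ∉ Θ then 2 * ((τ p.1 * τ p.2 : ℤ) : ℝ) else 0)
        = 2 * ∑ p ∈ pin l Θ, ((τ p.1 * τ p.2 : ℤ) : ℝ) := by
      rw [← Finset.sum_filter]
      rw [show (pairsIn l).filter (fun p => p.1 ∈ Θ ∧ p.2 ∉ Θ) = pin l Θ by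
        ext p
        simp only [Finset.mem_filter, mem_pairsIn, mem_pin]
        constructor
        · rintro ⟨⟨a, b, c⟩, d, e⟩; exact ⟨d, b, c, e⟩
        · rintro ⟨a, b, c, d⟩; exact ⟨⟨hΘ a, b, c⟩, a, d⟩]
      rw [Finset.mul_sum]
    have e2 : ∑ p ∈ pairsIn l, (if p.2 ∈ Θ ∧ p.1 ∉ Θ then 2 * ((τ p.1 * τ p.2 : ℤ) : ℝ) else 0)
        = 2 * ∑ p ∈ pin l Θ, ((τ p.1 * τ p.2 : ℤ) : ℝ) := by
      rw [sum_pairsIn_swap (fun p => if p.2 ∈ Θ ∧ p.1 ∉ Θ then 2 * ((τ p.1 * τ p.2 : ℤ) : ℝ) else 0)]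
      simp only [Prod.fst_swap, Prod.snd_swap]
      have : ∀ p : Site × Site, (if p.1 ∈ Θ ∧ p.2 ∉ Θ then 2 * ((τ p.2 * τ p.1 : ℤ) : ℝ) else 0)
          = (if p.1 ∈ Θ ∧ p.2 ∉ Θ then 2 * ((τ p.1 * τ p.2 : ℤ) : ℝ) else 0) := by
        intro p; rw [mul_comm (τ p.2) (τ p.1)]
      rw [Finset.sum_congr rfl (fun p _ => this p)]
      exact e1
    rw [e1, e2]; ring
  have hB : ∑ x ∈ lamBox l, ∑ y ∈ (nbrs x).filter (· ∉ lamBox l), (τ x : ℝ) * ω y -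
      ∑ x ∈ lamBox l, ∑ y ∈ (nbrs x).filter (· ∉ lamBox l), ((flipC Θ τ x : ℤ) : ℝ) * ω y =
      2 * ∑ p ∈ pout l Θ, (τ p.1 : ℝ) * ω p.2 := by
    rw [← Finset.sum_sub_distrib]
    have hpt : ∀ x ∈ lamBox l,
        (∑ y ∈ (nbrs x).filter (· ∉ lamBox l), (τ x : ℝ) * ω y) -
        (∑ y ∈ (nbrs x).filter (· ∉ lamBox l), ((flipC Θ τ x : ℤ) : ℝ) * ω y) =
        (if x ∈ Θ then ∑ y ∈ (nbrs x).filter (· ∉ lamBox l), 2 * ((τ x : ℝ) * ω y) else 0) := by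
      intro x _
      by_cases h1 : x ∈ Θ
      · rw [if_pos h1, ← Finset.sum_sub_distrib]
        refine Finset.sum_congr rfl fun y _ => ?_
        simp only [flipC, h1, if_true]
        push_cast
        ring
      · rw [if_neg h1]
        simp [flipC, h1]
    rw [Finset.sum_congr rfl hpt, ← Finset.sum_filter,
      show (lamBox l).filter (· ∈ Θ) = Θ by
        ext x; simp only [Finset.mem_filter]
        exact ⟨fun h => h.2, fun h => ⟨hΘ h, h⟩⟩]
    rw [pout, sum_pairs, Finset.mul_sum]
    refine Finset.sum_congr rfl fun x _ => ?_
    rw [Finset.mul_sum]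
  rw [show ∀ a b c d : ℝ, (-(1/2)*a - c) - (-(1/2)*b - d) = -(1/2)*(a-b) - (c - d) by
    intros; ring]
  rw [hA, hB]
  push_cast
  ring

end HamAlg
/-! Group I: telescoping -/

section Tele
variable {l : ℕ} {ω : Site → ℝ} {σ : Site → ℤ}

lemma foldr_flip_prod {L : List (Finset Site)} {x y : Site}
    (h : ∀ Θ' ∈ L, (x ∈ Θ' ↔ y ∈ Θ')) (τ : Site → ℤ) :
    (L.foldr flipC τ) x * (L.foldr flipC τ) y = τ x * τ y := by
  induction L with
  | nil => rfl
  | cons Θ' L' ih =>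
    have hx := h Θ' (by simp)
    have ih' := ih (fun Θ'' h'' => h Θ'' (by simp [h'']))
    by_cases hxΘ : x ∈ Θ'
    · have hyΘ : y ∈ Θ' := hx.1 hxΘ
      simp only [List.foldr_cons, flipC, hxΘ, hyΘ, if_true]
      rw [neg_mul_neg]
      exact ih'
    · have hyΘ : y ∉ Θ' := fun hc => hxΘ (hx.2 hc)
      simp only [List.foldr_cons, flipC, hxΘ, hyΘ, if_false]
      exact ih'

lemma foldr_flip_id {L : List (Finset Site)} {x : Site}
    (h : ∀ Θ' ∈ L, x ∉ Θ') (τ : Site → ℤ) : (L.foldr flipC τ) x = τ x := by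
  induction L with
  | nil => rfl
  | cons Θ' L' ih =>
    simp only [List.foldr_cons, flipC, h Θ' (by simp), if_false]
    exact ih (fun Θ'' h'' => h Θ'' (by simp [h'']))

/-- The energy cost of a single contour. -/
noncomputable def delta (l : ℕ) (ω : Site → ℝ) (Θ : Finset Site) (σ : Site → ℤ) : ℝ :=
  -2 * ∑ p ∈ pin l Θ, ((σ p.1 * σ p.2 : ℤ) : ℝ) - 2 * ∑ p ∈ pout l Θ, (σ p.1 : ℝ) * ω p.2

lemma dH_eq_sum (L : List (Finset Site))
    (hsub : ∀ Θ ∈ L, Θ ⊆ lamBox l)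
    (hnonint : ∀ Θ ∈ L, ∀ Θ' ∈ L, Θ ≠ Θ' →
      (∀ p ∈ pin l Θ, (p.1 ∈ Θ' ↔ p.2 ∈ Θ')) ∧ (∀ p ∈ pout l Θ, p.1 ∉ Θ'))
    (hnodup : L.Nodup) :
    dH l ω L σ = (L.map (fun Θ => delta l ω Θ σ)).sum := by
  induction L with
  | nil => simp [dH]
  | cons Θ L' ih =>
    have hsub' : ∀ Θ'' ∈ L', Θ'' ⊆ lamBox l := fun Θ'' h => hsub Θ'' (by simp [h])
    have hnonint' : ∀ Θ'' ∈ L', ∀ Θ' ∈ L', Θ'' ≠ Θ' →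
        (∀ p ∈ pin l Θ'', (p.1 ∈ Θ' ↔ p.2 ∈ Θ')) ∧ (∀ p ∈ pout l Θ'', p.1 ∉ Θ') :=
      fun A hA B hB hne => hnonint A (by simp [hA]) B (by simp [hB]) hne
    have hnodup' : L'.Nodup := (List.nodup_cons.1 hnodup).2
    have hΘL' : Θ ∉ L' := (List.nodup_cons.1 hnodup).1
    have key : dH l ω (Θ :: L') σ = dH l ω L' σ + (Ham l ω (L'.foldr flipC σ) -
        Ham l ω (flipC Θ (L'.foldr flipC σ))) := by
      simp only [dH, List.foldr_cons]
      ring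
    rw [key, ih hsub' hnonint' hnodup', flip_diff (hsub Θ (by simp)) (L'.foldr flipC σ)]
    have hpinv : ∀ p ∈ pin l Θ,
        (L'.foldr flipC σ) p.1 * (L'.foldr flipC σ) p.2 = σ p.1 * σ p.2 := by
      intro p hp
      refine foldr_flip_prod (fun Θ' hΘ' => ?_) σ
      have hne : Θ ≠ Θ' := fun h => hΘL' (h ▸ hΘ')
      exact (hnonint Θ (by simp) Θ' (by simp [hΘ']) hne).1 p hp
    have hpoutv : ∀ p ∈ pout l Θ, (L'.foldr flipC σ) p.1 = σ p.1 := by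
      intro p hp
      refine foldr_flip_id (fun Θ' hΘ' => ?_) σ
      have hne : Θ ≠ Θ' := fun h => hΘL' (h ▸ hΘ')
      exact (hnonint Θ (by simp) Θ' (by simp [hΘ']) hne).2 p hp
    have e1 : ∑ p ∈ pin l Θ, (((L'.foldr flipC σ) p.1 * (L'.foldr flipC σ) p.2 : ℤ) : ℝ) =
        ∑ p ∈ pin l Θ, ((σ p.1 * σ p.2 : ℤ) : ℝ) :=
      Finset.sum_congr rfl fun p hp => by rw [hpinv p hp]
    have e2 : ∑ p ∈ pout l Θ, (((L'.foldr flipC σ) p.1 : ℤ) : ℝ) * ω p.2 =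
        ∑ p ∈ pout l Θ, ((σ p.1 : ℤ) : ℝ) * ω p.2 :=
      Finset.sum_congr rfl fun p hp => by rw [hpoutv p hp]
    rw [e1, e2]
    simp only [List.map_cons, List.sum_cons, delta]
    push_cast
    ring

end Tele
/-! Group J: per-contour bounds and final assembly -/

section Final
variable {l : ℕ} {ω : Site → ℝ} {σ : Site → ℤ} {ε : ℤ}

lemma sum_take_ofFn {n : ℕ} (g : Fin n → ℝ) :
    ∀ p, p ≤ n → ((List.ofFn g).take p).sum =
      ∑ j ∈ Finset.univ.filter (fun j : Fin n => (j : ℕ) < p), g j := by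
  intro p
  induction p with
  | zero => intro _; simp
  | succ p ih =>
    intro hp
    have hpn : p < n := hp
    rw [List.sum_take_succ _ p (by simpa using hpn), ih (le_of_lt hpn),
      List.getElem_ofFn]
    rw [show Finset.univ.filter (fun j : Fin n => (j : ℕ) < p + 1) =
        insert (⟨p, hpn⟩ : Fin n) (Finset.univ.filter (fun j : Fin n => (j : ℕ) < p)) by
      ext j; simp [Fin.ext_iff]; omega]
    rw [Finset.sum_insert (by simp)]
    ring

lemma contour_bounds (hσ : ∀ x ∈ lamBox l, σ x = 1 ∨ σ x = -1) (hε : ε = 1 ∨ ε = -1)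
    (hω : ∀ y ∈ extBdry l, |ω y| ≤ 1) {Θ C : Finset Site}
    (hC : IsCluster l σ ε C) (hfill : (↑Θ : Set Site) = fill C)
    (hnc : NonCrossing l (contourOf Θ)) :
    0 ≤ (1/2 : ℝ) * ((contourOf Θ).card : ℝ) - ((contourOf Θ ∩ boxBdry l).card : ℝ) ∧
    (1/2 : ℝ) * ((contourOf Θ).card : ℝ) - ((contourOf Θ ∩ boxBdry l).card : ℝ) ≤
      (1/2) * delta l ω Θ σ ∧
    0 ≤ (1/2 : ℝ) * delta l ω Θ σ := by
  have hΘ : Θ ⊆ lamBox l := region_sub hC hfill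
  have e1 : ∑ p ∈ pin l Θ, ((σ p.1 * σ p.2 : ℤ) : ℝ) = -((pin l Θ).card : ℝ) := by
    have hc : ∀ p ∈ pin l Θ, ((σ p.1 * σ p.2 : ℤ) : ℝ) = -1 := by
      intro p hp
      obtain ⟨h1, h2, h3, h4⟩ := mem_pin.1 hp
      rw [bd_spin_out hσ hε hC hfill h1 h2 h4 h3]
      norm_num
    rw [Finset.sum_congr rfl hc, Finset.sum_const]
    simp
  have e2 : ∀ p ∈ pout l Θ, (σ p.1 : ℝ) = (ε : ℝ) := by
    intro p hp
    obtain ⟨h1, h2, h3⟩ := mem_pout.1 hp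
    have hyΘ : p.2 ∉ Θ := fun h => h3 (hΘ h)
    have : p.1 ∈ C := bd_in_cluster hC hfill h1 h2 hyΘ
    rw [(hC.2.1 p.1 this).2]
  have hεabs : |(ε : ℝ)| = 1 := by rcases hε with h | h <;> rw [h] <;> norm_num
  have e3 : ∑ p ∈ pout l Θ, (σ p.1 : ℝ) * ω p.2 ≤ ((pout l Θ).card : ℝ) := by
    calc ∑ p ∈ pout l Θ, (σ p.1 : ℝ) * ω p.2 ≤ ∑ p ∈ pout l Θ, 1 := by
          refine Finset.sum_le_sum fun p hp => ?_
          rw [e2 p hp]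
          have hext : p.2 ∈ extBdry l := by
            obtain ⟨h1, h2, h3⟩ := mem_pout.1 hp
            exact ⟨h3, p.1, hΘ h1, d1_of_mem_nbrs h2⟩
          calc (ε : ℝ) * ω p.2 ≤ |(ε : ℝ) * ω p.2| := le_abs_self _
            _ = |ω p.2| := by rw [abs_mul, hεabs, one_mul]
            _ ≤ 1 := hω p.2 hext
      _ = ((pout l Θ).card : ℝ) := by simp
  have hdelta : (1/2 : ℝ) * delta l ω Θ σ =
      ((pin l Θ).card : ℝ) - ∑ p ∈ pout l Θ, (σ p.1 : ℝ) * ω p.2 := by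
    rw [delta, e1]; ring
  have hcards : ((pout l Θ).card : ℝ) ≤ ((pin l Θ).card : ℝ) := by
    exact_mod_cast pout_card_le_pin hΘ hnc
  have hγ : ((contourOf Θ).card : ℝ) = ((pin l Θ).card : ℝ) + ((pout l Θ).card : ℝ) := by
    rw [card_contour hΘ]; push_cast; ring
  have hγ2 : ((contourOf Θ ∩ boxBdry l).card : ℝ) = ((pout l Θ).card : ℝ) := by
    exact_mod_cast card_inter_boxBdry hΘ
  refine ⟨by rw [hγ, hγ2]; linarith, by rw [hγ, hγ2]; linarith, by linarith⟩

end Final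

/-- For non-crossing (ε)-contours `γ₁,…,γ_m` at `σ` in `Λ(l)` and
`0 ≤ p ≤ m`: `(1/2)Δ_{γ₁,…,γ_m}H^ω(σ) ≥ (1/2)Δ_{γ₁,…,γ_p}H^ω(σ)
+ ∑_{j=p+1}^m ((1/2)|γ_j| - |γ_j ∩ ∂Q(Λ(l))|) ≥ (1/2)Δ_{γ₁,…,γ_p}H^ω(σ) ≥ 0`. -/
theorem stmt15 (l : ℕ) (σ : Site → ℤ) (hσ : ∀ x ∈ lamBox l, σ x = 1 ∨ σ x = -1)
    (ε : ℤ) (hε : ε = 1 ∨ ε = -1) (ω : Site → ℝ)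
    (hω : ∀ y ∈ extBdry l, |ω y| ≤ 1)
    (m : ℕ) (Θs : Fin m → Finset Site)
    (hcs : ∀ j, IsEContour l σ ε (Θs j)) (hinj : Function.Injective Θs)
    (hnc : ∀ j, NonCrossing l (contourOf (Θs j)))
    (p : ℕ) (hp : p ≤ m) :
    (1/2 : ℝ) * dH l ω (List.ofFn Θs) σ ≥
        (1/2) * dH l ω ((List.ofFn Θs).take p) σ +
          ∑ j ∈ Finset.univ.filter (fun j : Fin m => p ≤ (j : ℕ)),
            ((1/2) * ((contourOf (Θs j)).card : ℝ) -
              ((contourOf (Θs j) ∩ boxBdry l).card : ℝ)) ∧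
      (1/2 : ℝ) * dH l ω ((List.ofFn Θs).take p) σ +
          ∑ j ∈ Finset.univ.filter (fun j : Fin m => p ≤ (j : ℕ)),
            ((1/2) * ((contourOf (Θs j)).card : ℝ) -
              ((contourOf (Θs j) ∩ boxBdry l).card : ℝ)) ≥
        (1/2) * dH l ω ((List.ofFn Θs).take p) σ ∧
      (0 : ℝ) ≤ (1/2) * dH l ω ((List.ofFn Θs).take p) σ := by

  classical
  choose Cs hCs using hcs
  set L := List.ofFn Θs with hL
  have hmemL : ∀ Θ ∈ L, ∃ j, Θs j = Θ := by
    intro Θ hΘ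
    exact List.mem_ofFn.1 hΘ
  have hsubL : ∀ Θ ∈ L, Θ ⊆ lamBox l := by
    intro Θ hΘ
    obtain ⟨j, rfl⟩ := hmemL Θ hΘ
    exact region_sub (hCs j).1 (hCs j).2
  have hnonint : ∀ Θ ∈ L, ∀ Θ' ∈ L, Θ ≠ Θ' →
      (∀ p ∈ pin l Θ, (p.1 ∈ Θ' ↔ p.2 ∈ Θ')) ∧ (∀ p ∈ pout l Θ, p.1 ∉ Θ') := by
    intro Θ hΘ Θ' hΘ' hne
    obtain ⟨j, rfl⟩ := hmemL Θ hΘ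
    obtain ⟨k, rfl⟩ := hmemL Θ' hΘ'
    constructor
    · intro q hq
      obtain ⟨h1, h2, h3, h4⟩ := mem_pin.1 hq
      exact nonint_in hσ (hCs j).1 (hCs k).1 (hCs j).2 (hCs k).2 hne h1 h2 h4 h3
    · intro q hq
      obtain ⟨h1, h2, h3⟩ := mem_pout.1 hq
      exact nonint_out (hCs j).1 (hCs k).1 (hCs j).2 (hCs k).2 hne h1 h2 h3
  have hnodup : L.Nodup := List.nodup_ofFn.2 hinj
  have hsubl : (L.take p).Sublist L := List.take_sublist p L
  have hdH1 : dH l ω L σ = ∑ j : Fin m, delta l ω (Θs j) σ := by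
    rw [dH_eq_sum L hsubL hnonint hnodup, hL, List.map_ofFn, List.sum_ofFn]
    rfl
  have hlen : p ≤ m := hp
  have hdH2 : dH l ω (L.take p) σ =
      ∑ j ∈ Finset.univ.filter (fun j : Fin m => (j : ℕ) < p), delta l ω (Θs j) σ := by
    rw [dH_eq_sum (L.take p) (fun Θ h => hsubL Θ (hsubl.subset h))
      (fun Θ h Θ' h' hne => hnonint Θ (hsubl.subset h) Θ' (hsubl.subset h') hne)
      (hsubl.nodup hnodup)]
    rw [List.map_take, hL, List.map_ofFn]
    exact sum_take_ofFn _ p hlen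
  have hbounds := fun j : Fin m => contour_bounds hσ hε hω (hCs j).1 (hCs j).2 (hnc j)
  have hfeq : Finset.univ.filter (fun j : Fin m => ¬ ((j : ℕ) < p)) =
      Finset.univ.filter (fun j : Fin m => p ≤ (j : ℕ)) := by
    ext j; simp [not_lt]
  have hsplit : ∑ j : Fin m, delta l ω (Θs j) σ =
      (∑ j ∈ Finset.univ.filter (fun j : Fin m => (j : ℕ) < p), delta l ω (Θs j) σ) +
      ∑ j ∈ Finset.univ.filter (fun j : Fin m => p ≤ (j : ℕ)), delta l ω (Θs j) σ := by
    rw [← Finset.sum_filter_add_sum_filter_not Finset.univ (fun j : Fin m => (j : ℕ) < p)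
      (fun j => delta l ω (Θs j) σ), hfeq]
  have h1 : ∑ j ∈ Finset.univ.filter (fun j : Fin m => p ≤ (j : ℕ)),
      ((1/2) * ((contourOf (Θs j)).card : ℝ) - ((contourOf (Θs j) ∩ boxBdry l).card : ℝ)) ≤
      ∑ j ∈ Finset.univ.filter (fun j : Fin m => p ≤ (j : ℕ)), (1/2) * delta l ω (Θs j) σ :=
    Finset.sum_le_sum fun j _ => (hbounds j).2.1
  have e1 : ∑ j ∈ Finset.univ.filter (fun j : Fin m => p ≤ (j : ℕ)),
      (1/2 : ℝ) * delta l ω (Θs j) σ =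
      (1/2) * ∑ j ∈ Finset.univ.filter (fun j : Fin m => p ≤ (j : ℕ)), delta l ω (Θs j) σ := by
    rw [Finset.mul_sum]
  have hF0 : (0 : ℝ) ≤ ∑ j ∈ Finset.univ.filter (fun j : Fin m => p ≤ (j : ℕ)),
      ((1/2) * ((contourOf (Θs j)).card : ℝ) - ((contourOf (Θs j) ∩ boxBdry l).card : ℝ)) :=
    Finset.sum_nonneg fun j _ => (hbounds j).1
  have hD0 : (0 : ℝ) ≤ ∑ j ∈ Finset.univ.filter (fun j : Fin m => (j : ℕ) < p),
      delta l ω (Θs j) σ :=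
    Finset.sum_nonneg fun j _ => by have := (hbounds j).2.2; linarith
  refine ⟨?_, ?_, ?_⟩
  · rw [hdH1, hdH2, hsplit]
    linarith [h1, e1]
  · rw [hdH2]
    linarith [hF0]
  · rw [hdH2]
    linarith [hD0]
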